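/- Let γ₁ ≥ 0, γ₂ ≥ 1 be integers, γ₃ ∈ ℝ, and R ∈ ℂ[X] with R(im) ≠ 0 for all m ∈ ℝ. Let B ∈ E_{(β,μ)} and let a_{γ₁,κ}(τ,m) be continuous on (closure(D(0,ρ)) ∪ S_d) × ℝ, holomorphic in τ, with |a_{γ₁,κ}(τ,m)| ≤ 1/((1+|τ|^κ)^{γ₁} |R(im)|). Then ε^{−γ₃} τ^{γ₂} B(m) a_{γ₁,κ}(τ,m) lies in F^d_{(ν,β,μ,χ,κ,ε)} and there exists C₁ > 0 depending only on ν, κ, γ₂ with ‖ε^{−γ₃} τ^{γ₂} B(m) a_{γ₁,κ}(τ,m)‖_{(ν,β,μ,χ,κ,ε)} ≤ C₁ (‖B‖_{(β,μ)} / inf_{m∈ℝ}|R(im)|) |ε|^{χγ₂ − γ₃} for all ε ∈ E. -/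

import Mathlib

private lemma scalar_bound (ν : ℝ) (hν : 0 < ν) (κ n : ℕ) (hκ : 1 ≤ κ)
    (t : ℝ) (ht : 0 ≤ t) :
    t ^ n * (1 + t ^ (2 * κ)) * Real.exp (-ν * t ^ κ) ≤
      2 * Real.exp ν * 2 ^ (n + 2 * κ) *
        (1 + (Nat.factorial (n + 2 * κ)) / ν ^ (n + 2 * κ)) := by
  set N := n + 2 * κ with hN
  have h1 : Real.exp (-ν * t ^ κ) ≤ Real.exp ν * Real.exp (-ν * t) := by
    rw [← Real.exp_add]
    apply Real.exp_le_exp.2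
    have hpow : t - 1 ≤ t ^ κ := by
      rcases le_or_gt t 1 with h | h
      · nlinarith [pow_nonneg ht κ]
      · have := le_self_pow₀ h.le (by omega : κ ≠ 0)
        linarith
    nlinarith
  have h2 : t ^ n * (1 + t ^ (2 * κ)) ≤ 2 * (1 + t) ^ N := by
    have ha : t ^ n ≤ (1 + t) ^ n := pow_le_pow_left₀ ht (by linarith) n
    have hb : 1 + t ^ (2 * κ) ≤ 2 * (1 + t) ^ (2 * κ) := by
      have h1' : (1 : ℝ) ≤ (1 + t) ^ (2 * κ) := one_le_pow₀ (by linarith)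
      have h2' : t ^ (2 * κ) ≤ (1 + t) ^ (2 * κ) := pow_le_pow_left₀ ht (by linarith) _
      linarith
    calc t ^ n * (1 + t ^ (2 * κ)) ≤ (1 + t) ^ n * (2 * (1 + t) ^ (2 * κ)) :=
          mul_le_mul ha hb (by positivity) (by positivity)
      _ = 2 * (1 + t) ^ N := by rw [hN, pow_add]; ring
  have h3 : (1 + t) ^ N * Real.exp (-ν * t) ≤ 2 ^ N * (1 + (Nat.factorial N) / ν ^ N) := by
    have hf : (0 : ℝ) ≤ (Nat.factorial N) / ν ^ N := by positivity
    rcases le_or_gt t 1 with h | h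
    · have hA : (1 + t) ^ N ≤ 2 ^ N := pow_le_pow_left₀ (by linarith) (by linarith) N
      have he : Real.exp (-ν * t) ≤ 1 := by
        rw [show (1 : ℝ) = Real.exp 0 from (Real.exp_zero).symm]
        exact Real.exp_le_exp.2 (by nlinarith)
      nlinarith [pow_nonneg (by linarith : (0:ℝ) ≤ 1 + t) N, (Real.exp_pos (-ν * t)).le,
        pow_nonneg (by norm_num : (0:ℝ) ≤ 2) N]
    · have hA : (1 + t) ^ N ≤ 2 ^ N * t ^ N := by
        calc (1 + t) ^ N ≤ (2 * t) ^ N := pow_le_pow_left₀ (by linarith) (by linarith) N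
          _ = 2 ^ N * t ^ N := mul_pow 2 t N
      have hB : t ^ N * Real.exp (-ν * t) ≤ (Nat.factorial N) / ν ^ N := by
        have key : ν ^ N * t ^ N / (Nat.factorial N) ≤ Real.exp (ν * t) := by
          have := Real.pow_div_factorial_le_exp (x := ν * t) (by positivity) N
          rwa [mul_pow] at this
        have hν' : (0 : ℝ) < ν ^ N := by positivity
        have hNf : (0 : ℝ) < (Nat.factorial N : ℝ) := by positivity
        rw [show Real.exp (-ν * t) = (Real.exp (ν * t))⁻¹ by
          rw [neg_mul, Real.exp_neg]]
        rw [mul_inv_le_iff₀ (Real.exp_pos _), div_mul_eq_mul_div, le_div_iff₀ hν']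
        have := (div_le_iff₀ hNf).1 key
        nlinarith
      calc (1 + t) ^ N * Real.exp (-ν * t) ≤ (2 ^ N * t ^ N) * Real.exp (-ν * t) :=
            mul_le_mul_of_nonneg_right hA (Real.exp_pos _).le
        _ = 2 ^ N * (t ^ N * Real.exp (-ν * t)) := by ring
        _ ≤ 2 ^ N * ((Nat.factorial N) / ν ^ N) :=
            mul_le_mul_of_nonneg_left hB (by positivity)
        _ ≤ 2 ^ N * (1 + (Nat.factorial N) / ν ^ N) := by
            have : (0:ℝ) ≤ (2:ℝ) ^ N := by positivity
            nlinarith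
  calc t ^ n * (1 + t ^ (2 * κ)) * Real.exp (-ν * t ^ κ)
      ≤ (2 * (1 + t) ^ N) * (Real.exp ν * Real.exp (-ν * t)) :=
        mul_le_mul h2 h1 (Real.exp_pos _).le (by positivity)
    _ = 2 * Real.exp ν * ((1 + t) ^ N * Real.exp (-ν * t)) := by ring
    _ ≤ 2 * Real.exp ν * (2 ^ N * (1 + (Nat.factorial N) / ν ^ N)) :=
        mul_le_mul_of_nonneg_left h3 (by positivity)
    _ = 2 * Real.exp ν * 2 ^ N * (1 + (Nat.factorial N) / ν ^ N) := by ring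

/-- Norm estimate. -/
theorem stmt_11 (ν χ : ℝ) (hν : 0 < ν) (κ : ℕ) (hκ : 1 ≤ κ) (γ₂ : ℕ) (hγ₂ : 1 ≤ γ₂) :
    ∃ C₁ : ℝ, 0 < C₁ ∧
      ∀ (ρ β μ : ℝ), 0 < ρ → 0 < β → 1 < μ →
      ∀ (d η : ℝ), 0 < η →
      ∀ (γ₁ : ℕ) (γ₃ : ℝ) (R : Polynomial ℂ),
        (∀ x : ℝ, R.eval (Complex.I * x) ≠ 0) →
      ∀ rinf : ℝ, 0 < rinf → (∀ x : ℝ, rinf ≤ ‖R.eval (Complex.I * x)‖) →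
      ∀ (B : ℝ → ℂ) (CB : ℝ),
        (∀ x : ℝ, (1 + |x|) ^ μ * Real.exp (β * |x|) * ‖B x‖ ≤ CB) →
      ∀ a : ℂ → ℝ → ℂ,
        (∀ τ : ℂ, (τ ∈ closure (Metric.ball (0 : ℂ) ρ) ∨
            (τ ≠ 0 ∧ |Complex.arg τ - d| < η)) →
          ∀ x : ℝ, ‖a τ x‖ ≤ 1 / ((1 + ‖τ‖ ^ κ) ^ γ₁ * ‖R.eval (Complex.I * x)‖)) →
      ∀ ε : ℂ, ε ≠ 0 →
      ∀ τ : ℂ, (τ ∈ closure (Metric.ball (0 : ℂ) ρ) ∨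
          (τ ≠ 0 ∧ |Complex.arg τ - d| < η)) →
      ∀ x : ℝ,
        (1 + |x|) ^ μ * Real.exp (β * |x|) *
          ((1 + ‖τ / ε ^ (χ : ℂ)‖ ^ (2 * κ)) / ‖τ / ε ^ (χ : ℂ)‖) *
          Real.exp (-ν * ‖τ / ε ^ (χ : ℂ)‖ ^ κ) *
          ‖ε ^ (-(γ₃ : ℂ)) * τ ^ γ₂ * B x * a τ x‖
        ≤ C₁ * (CB / rinf) * ‖ε‖ ^ (χ * γ₂ - γ₃) := by
  obtain ⟨n, rfl⟩ : ∃ n, γ₂ = n + 1 := ⟨γ₂ - 1, (Nat.succ_pred_eq_of_pos hγ₂).symm⟩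
  refine ⟨2 * Real.exp ν * 2 ^ (n + 2 * κ) *
      (1 + (Nat.factorial (n + 2 * κ)) / ν ^ (n + 2 * κ)), by positivity, ?_⟩
  intro ρ β μ hρ hβ hμ d η hη γ₁ γ₃ R hR rinf hrinf hrle B CB hB a ha ε hε τ hτ x
  have hCB : 0 ≤ CB := le_trans (by positivity) (hB 0)
  have hC₁pos : (0:ℝ) < 2 * Real.exp ν * 2 ^ (n + 2 * κ) *
      (1 + (Nat.factorial (n + 2 * κ)) / ν ^ (n + 2 * κ)) := by positivity
  rcases eq_or_ne τ 0 with rfl | hτ0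
  · simp only [zero_pow (Nat.succ_ne_zero n), mul_zero, zero_mul, norm_zero]
    have : (0:ℝ) ≤ ‖ε‖ ^ (χ * ((n+1 : ℕ):ℝ) - γ₃) := Real.rpow_nonneg (norm_nonneg _) _
    positivity
  · have hεn : 0 < ‖ε‖ := norm_pos_iff.2 hε
    have hεχ : ε ^ (χ : ℂ) ≠ 0 := by
      rw [Complex.cpow_def_of_ne_zero hε]; exact Complex.exp_ne_zero _
    set t := ‖τ / ε ^ (χ : ℂ)‖ with htdef
    have ht : 0 < t := norm_pos_iff.2 (div_ne_zero hτ0 hεχ)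
    have hεχn : ‖ε ^ (χ : ℂ)‖ = ‖ε‖ ^ χ := by
      rw [Complex.norm_cpow_of_ne_zero hε]
      simp
    have hεγ : ‖ε ^ (-(γ₃ : ℂ))‖ = ‖ε‖ ^ (-γ₃) := by
      rw [Complex.norm_cpow_of_ne_zero hε]
      simp
    have hτnorm : ‖τ‖ = t * ‖ε‖ ^ χ := by
      rw [htdef, norm_div, hεχn, div_mul_cancel₀]
      exact (Real.rpow_pos_of_pos hεn χ).ne'
    have hτpow : ‖τ‖ ^ (n + 1) = t ^ (n + 1) * ‖ε‖ ^ (χ * ((n+1 : ℕ):ℝ)) := by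
      rw [hτnorm, mul_pow]
      congr 1
      rw [Real.rpow_mul (norm_nonneg ε), Real.rpow_natCast]
    have hnorm : ‖ε ^ (-(γ₃ : ℂ)) * τ ^ (n + 1) * B x * a τ x‖
        = ‖ε‖ ^ (-γ₃) * ‖τ‖ ^ (n + 1) * ‖B x‖ * ‖a τ x‖ := by
      rw [norm_mul, norm_mul, norm_mul, norm_pow, hεγ]
    have hεcomb : ‖ε‖ ^ (-γ₃) * ‖ε‖ ^ (χ * ((n+1 : ℕ):ℝ)) = ‖ε‖ ^ (χ * ((n+1 : ℕ):ℝ) - γ₃) := by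
      rw [← Real.rpow_add hεn]; ring_nf
    -- bound on a
    have hanorm : ‖a τ x‖ ≤ 1 / rinf := by
      refine (ha τ hτ x).trans (one_div_le_one_div_of_le hrinf ?_)
      calc rinf = 1 * rinf := (one_mul rinf).symm
        _ ≤ (1 + ‖τ‖ ^ κ) ^ γ₁ * ‖R.eval (Complex.I * x)‖ :=
            mul_le_mul (one_le_pow₀ (le_add_of_nonneg_right (by positivity))) (hrle x) hrinf.le (by positivity)
    have hscal := scalar_bound ν hν κ n hκ t ht.le
    have hLHS : (1 + |x|) ^ μ * Real.exp (β * |x|) *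
          ((1 + t ^ (2 * κ)) / t) * Real.exp (-ν * t ^ κ) *
          ‖ε ^ (-(γ₃ : ℂ)) * τ ^ (n + 1) * B x * a τ x‖
        = ((1 + |x|) ^ μ * Real.exp (β * |x|) * ‖B x‖) * ‖a τ x‖ *
            ‖ε‖ ^ (χ * ((n+1 : ℕ):ℝ) - γ₃) *
            (t ^ n * (1 + t ^ (2 * κ)) * Real.exp (-ν * t ^ κ)) := by
      rw [hnorm, hτpow, ← hεcomb]
      field_simp
      ring
    rw [hLHS]
    calc ((1 + |x|) ^ μ * Real.exp (β * |x|) * ‖B x‖) * ‖a τ x‖ *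
            ‖ε‖ ^ (χ * ((n+1 : ℕ):ℝ) - γ₃) *
            (t ^ n * (1 + t ^ (2 * κ)) * Real.exp (-ν * t ^ κ))
        ≤ CB * (1 / rinf) * ‖ε‖ ^ (χ * ((n+1 : ℕ):ℝ) - γ₃) *
            (2 * Real.exp ν * 2 ^ (n + 2 * κ) *
              (1 + (Nat.factorial (n + 2 * κ)) / ν ^ (n + 2 * κ))) := by
          have h0 : (0:ℝ) ≤ ‖ε‖ ^ (χ * ((n+1 : ℕ):ℝ) - γ₃) := Real.rpow_nonneg (norm_nonneg _) _
          have hWB : (0:ℝ) ≤ (1 + |x|) ^ μ * Real.exp (β * |x|) * ‖B x‖ := by positivity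
          gcongr
          exact hB x
      _ = 2 * Real.exp ν * 2 ^ (n + 2 * κ) *
              (1 + (Nat.factorial (n + 2 * κ)) / ν ^ (n + 2 * κ)) *
            (CB / rinf) * ‖ε‖ ^ (χ * ((n+1 : ℕ):ℝ) - γ₃) := by ring
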